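/- Let A be a block matrix with M×M blocks A_{ij}, each an N×N complex matrix, such that each diagonal block A_{ii} is Hermitian positive semidefinite and the block diagonal dominance condition λ_min(A_{ii}) ≥ ∑_{k≠i} ‖A_{ik}‖₂ holds for every i, where ‖·‖₂ is the spectral norm and λ_min the smallest eigenvalue. If additionally A is Hermitian, then A is positive semidefinite. -/

import Mathlib

open ComplexOrder Matrix

open Matrix in
private lemma quad_lower_bound {N : ℕ} {C : Matrix (Fin N) (Fin N) ℂ} (hC : C.IsHermitian)
    {c : ℝ} (hc : ∀ a, c ≤ hC.eigenvalues a) (v : Fin N → ℂ) :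
    (c : ℂ) * (star v ⬝ᵥ v) ≤ star v ⬝ᵥ C *ᵥ v := by
  have hd : Matrix.PosSemidef
      (Matrix.diagonal (fun a => ((hC.eigenvalues a - c : ℝ) : ℂ))) := by
    refine Matrix.PosSemidef.diagonal fun a => ?_
    simp only [Pi.zero_apply]
    rw [Complex.zero_le_real]
    linarith [hc a]
  have hdiageq : Matrix.diagonal (fun a => ((hC.eigenvalues a - c : ℝ) : ℂ)) =
      Matrix.diagonal (RCLike.ofReal ∘ hC.eigenvalues) - (c : ℂ) • 1 := by
    ext i j
    by_cases h : i = j <;>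
      simp [h, Matrix.diagonal_apply, Matrix.one_apply, Complex.ofReal_sub]
  have hU : (hC.eigenvectorUnitary : Matrix (Fin N) (Fin N) ℂ) *
      star (hC.eigenvectorUnitary : Matrix (Fin N) (Fin N) ℂ) = 1 :=
    Unitary.mul_star_self_of_mem (hC.eigenvectorUnitary).2
  have key : C - (c : ℂ) • 1 =
      (hC.eigenvectorUnitary : Matrix (Fin N) (Fin N) ℂ) *
        Matrix.diagonal (fun a => ((hC.eigenvalues a - c : ℝ) : ℂ)) *
        ((hC.eigenvectorUnitary : Matrix (Fin N) (Fin N) ℂ))ᴴ := by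
    rw [hdiageq, Matrix.mul_sub, Matrix.sub_mul, ← Matrix.star_eq_conjTranspose]
    rw [Matrix.mul_smul, Matrix.mul_one, Matrix.smul_mul, hU]
    conv_lhs => rw [hC.spectral_theorem]
    rw [Unitary.conjStarAlgAut_apply]
  have hpsd : (C - (c : ℂ) • 1).PosSemidef := by
    rw [key]
    exact hd.mul_mul_conjTranspose_same _
  have h := hpsd.dotProduct_mulVec_nonneg v
  rw [Matrix.sub_mulVec, dotProduct_sub, Matrix.smul_mulVec,
    Matrix.one_mulVec, dotProduct_smul] at h
  rw [← sub_nonneg]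
  simpa [smul_eq_mul] using h

open Matrix in
private lemma re_quad_lower_bound {N : ℕ} {C : Matrix (Fin N) (Fin N) ℂ} (hC : C.IsHermitian)
    {c : ℝ} (hc : ∀ a, c ≤ hC.eigenvalues a) (v : Fin N → ℂ) :
    c * ‖(WithLp.equiv 2 (Fin N → ℂ)).symm v‖ ^ 2 ≤ (star v ⬝ᵥ C *ᵥ v).re := by
  have h := quad_lower_bound hC hc v
  rw [Complex.le_def] at h
  have h1 := h.1
  have hvv : (star v ⬝ᵥ v : ℂ) = (‖(WithLp.equiv 2 (Fin N → ℂ)).symm v‖ : ℂ) ^ 2 := by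
    rw [show (WithLp.equiv 2 (Fin N → ℂ)).symm v = WithLp.toLp 2 v from rfl, dotProduct_comm,
      ← EuclideanSpace.inner_toLp_toLp (𝕜 := ℂ) v v, inner_self_eq_norm_sq_to_K]
    norm_cast
  rw [hvv] at h1
  have heq : ((c : ℂ) * ((‖(WithLp.equiv 2 (Fin N → ℂ)).symm v‖ : ℝ) : ℂ) ^ 2).re
      = c * ‖(WithLp.equiv 2 (Fin N → ℂ)).symm v‖ ^ 2 := by
    rw [← Complex.ofReal_pow, ← Complex.ofReal_mul, Complex.ofReal_re]
  rw [← heq]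
  exact h1

set_option maxHeartbeats 1000000 in
set_option synthInstance.maxHeartbeats 1000000 in
/-- Block Gerschgorin criterion: a Hermitian block matrix with PSD diagonal blocks whose
smallest eigenvalues dominate the sum of spectral norms of the off-diagonal blocks in each
block row is positive semidefinite. -/
theorem block_diag_dominant_posSemidef (M N : ℕ)
    (B : Fin M → Fin M → Matrix (Fin N) (Fin N) ℂ)
    (A : Matrix (Fin M × Fin N) (Fin M × Fin N) ℂ)
    (hA : ∀ i j a b, A (i, a) (j, b) = B i j a b)
    (hHerm : A.IsHermitian)
    (hdiag : ∀ i, (B i i).PosSemidef)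
    (hdom : ∀ i, ∀ a : Fin N,
      ∑ k ∈ Finset.univ.erase i, ‖Matrix.toEuclideanCLM (𝕜 := ℂ) (B i k)‖
        ≤ (hdiag i).1.eigenvalues a) :
    A.PosSemidef := by
  classical
  refine .of_dotProduct_mulVec_nonneg hHerm fun x => ?_
  set xb : Fin M → Fin N → ℂ := fun i a => x (i, a) with hxb
  set T : Fin M → Fin M → ℂ :=
    fun i j => dotProduct (star (xb i)) (B i j *ᵥ xb j) with hT
  set w : Fin M → Fin M → ℝ := fun i j => ‖Matrix.toEuclideanCLM (𝕜 := ℂ) (B i j)‖ with hw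
  set c : Fin M → ℝ := fun i => ∑ k ∈ Finset.univ.erase i, w i k with hc
  set f : Fin M → EuclideanSpace ℂ (Fin N) :=
    fun i => (WithLp.equiv 2 (Fin N → ℂ)).symm (xb i) with hf
  set n : Fin M → ℝ := fun i => ‖f i‖ with hn
  -- symmetry of blocks
  have hBsym : ∀ i j, B j i = star (B i j) := by
    intro i j
    ext b a
    rw [Matrix.star_eq_conjTranspose, Matrix.conjTranspose_apply, ← hA, ← hA]
    exact (hHerm.apply (j, b) (i, a)).symm
  have hwsym : ∀ i j, w i j = w j i := by
    intro i j
    rw [hw]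
    simp only
    rw [hBsym i j, map_star, ContinuousLinearMap.star_eq_adjoint]
    exact (ContinuousLinearMap.adjoint.norm_map _).symm
  -- the quadratic form as a double sum of block quadratic forms
  have hzsum : dotProduct (star x) (A *ᵥ x) = ∑ i, ∑ j, T i j := by
    simp only [hT, dotProduct, Matrix.mulVec, Pi.star_apply,
      Fintype.sum_prod_type, hA, Finset.mul_sum, hxb]
    exact Finset.sum_congr rfl fun i _ => Finset.sum_comm
  -- imaginary part is zero
  have him : (dotProduct (star x) (A *ᵥ x)).im = 0 := by
    have hstar : star (dotProduct (star x) (A *ᵥ x)) =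
        dotProduct (star x) (A *ᵥ x) := by
      calc star (star x ⬝ᵥ A *ᵥ x)
          = star (A *ᵥ x) ⬝ᵥ x := by rw [← star_dotProduct_star, star_star]
        _ = star x ᵥ* Aᴴ ⬝ᵥ x := by rw [Matrix.star_mulVec]
        _ = star x ⬝ᵥ Aᴴ *ᵥ x := (dotProduct_mulVec _ _ _).symm
        _ = star x ⬝ᵥ A *ᵥ x := by rw [hHerm.eq]
    rw [← Complex.conj_eq_iff_im]
    exact hstar
  -- inner product representation of the blocks
  have hTinner : ∀ i j, T i j = inner ℂ (f i) (Matrix.toEuclideanCLM (𝕜 := ℂ) (B i j) (f j)) := by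
    intro i j
    rw [hf]
    simp only
    exact dotProduct_comm _ _
  -- diagonal lower bound
  have hdiagbd : ∀ i, c i * n i ^ 2 ≤ (T i i).re := by
    intro i
    exact re_quad_lower_bound (hdiag i).1 (hdom i) (xb i)
  -- off-diagonal lower bound
  have hoffbd : ∀ i j, -(w i j * (n i * n j)) ≤ (T i j).re := by
    intro i j
    have habs : ‖T i j‖ ≤ w i j * (n i * n j) := by
      rw [hTinner]
      calc ‖(inner ℂ (f i) (Matrix.toEuclideanCLM (𝕜 := ℂ) (B i j) (f j)) : ℂ)‖
          ≤ ‖f i‖ * ‖Matrix.toEuclideanCLM (𝕜 := ℂ) (B i j) (f j)‖ :=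
            norm_inner_le_norm _ _
        _ ≤ ‖f i‖ * (‖Matrix.toEuclideanCLM (𝕜 := ℂ) (B i j)‖ * ‖f j‖) := by
            gcongr
            exact (Matrix.toEuclideanCLM (𝕜 := ℂ) (B i j)).le_opNorm _
        _ = w i j * (n i * n j) := by rw [hw, hn]; ring
    have hre : -‖T i j‖ ≤ (T i j).re := by
      have h1 := Complex.abs_re_le_norm (T i j)
      have h2 := neg_abs_le ((T i j).re)
      have h3 := abs_nonneg ((T i j).re)
      linarith
    linarith [neg_le_neg habs]
  -- nonnegativity of n and w
  have hn0 : ∀ i, 0 ≤ n i := fun i => norm_nonneg _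
  have hw0 : ∀ i j, 0 ≤ w i j := fun i j => norm_nonneg _
  -- swap lemma
  have hswap : ∀ F : Fin M → Fin M → ℝ,
      ∑ i, ∑ j ∈ Finset.univ.erase i, F i j = ∑ j, ∑ i ∈ Finset.univ.erase j, F i j := by
    intro F
    have h1 : ∀ i : Fin M, ∑ j ∈ Finset.univ.erase i, F i j = (∑ j, F i j) - F i i := by
      intro i
      rw [Finset.sum_erase_eq_sub (Finset.mem_univ i)]
    have h2 : ∀ j : Fin M, ∑ i ∈ Finset.univ.erase j, F i j = (∑ i, F i j) - F j j := by
      intro j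
      rw [Finset.sum_erase_eq_sub (Finset.mem_univ j)]
    simp_rw [h1, h2, Finset.sum_sub_distrib]
    rw [Finset.sum_comm]
  -- main combinatorial inequality
  have hA1 : ∑ i, ∑ j ∈ Finset.univ.erase i, w i j * n i ^ 2 = ∑ i, c i * n i ^ 2 := by
    refine Finset.sum_congr rfl fun i _ => ?_
    rw [hc]
    simp only
    rw [Finset.sum_mul]
  have hA2 : ∑ i, ∑ j ∈ Finset.univ.erase i, w i j * n j ^ 2 = ∑ i, c i * n i ^ 2 := by
    rw [hswap fun i j => w i j * n j ^ 2]
    refine Finset.sum_congr rfl fun j _ => ?_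
    rw [hc]
    simp only
    rw [Finset.sum_mul]
    refine Finset.sum_congr rfl fun i _ => ?_
    rw [hwsym j i]
  have hmain : ∑ i, ∑ j ∈ Finset.univ.erase i, w i j * (n i * n j) ≤ ∑ i, c i * n i ^ 2 := by
    have keyle : 2 * (∑ i, ∑ j ∈ Finset.univ.erase i, w i j * (n i * n j))
        ≤ ∑ i, ∑ j ∈ Finset.univ.erase i, (w i j * n i ^ 2 + w i j * n j ^ 2) := by
      rw [Finset.mul_sum]
      simp_rw [Finset.mul_sum]
      refine Finset.sum_le_sum fun i _ => Finset.sum_le_sum fun j _ => ?_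
      nlinarith [sq_nonneg (n i - n j), hw0 i j]
    have key2 : ∑ i, ∑ j ∈ Finset.univ.erase i, (w i j * n i ^ 2 + w i j * n j ^ 2)
        = 2 * ∑ i, c i * n i ^ 2 := by
      simp_rw [Finset.sum_add_distrib]
      rw [hA1, hA2]
      ring
    linarith
  -- real part nonneg
  have hre : 0 ≤ (dotProduct (star x) (A *ᵥ x)).re := by
    rw [hzsum, Complex.re_sum]
    have hsplit : ∀ i : Fin M, (∑ j, T i j).re
        = (T i i).re + ∑ j ∈ Finset.univ.erase i, (T i j).re := by
      intro i
      rw [Complex.re_sum, ← Finset.add_sum_erase _ _ (Finset.mem_univ i)]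
    calc (0:ℝ)
        ≤ (∑ i, c i * n i ^ 2) - ∑ i, ∑ j ∈ Finset.univ.erase i, w i j * (n i * n j) :=
          sub_nonneg.mpr hmain
      _ = ∑ i, (c i * n i ^ 2 + ∑ j ∈ Finset.univ.erase i, -(w i j * (n i * n j))) := by
          rw [Finset.sum_add_distrib]
          simp only [Finset.sum_neg_distrib]
          ring
      _ ≤ ∑ i, (∑ j, T i j).re := by
          refine Finset.sum_le_sum fun i _ => ?_
          rw [hsplit i]
          exact add_le_add (hdiagbd i) (Finset.sum_le_sum fun j _ => hoffbd i j)
  rw [Complex.nonneg_iff]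
  exact ⟨hre, him.symm⟩
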